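/- Let T ≥ 0, β < 1, γ > 0 with γ ≥ β, and let M : [T,∞) → ℝ be continuous such that the improper integral ∫_t^∞ M(s) ds converges for every t ≥ T. Define q₁(t) := M(t), Q_k(t) := −∫_t^∞ q_k(s) ds for k ≥ 1, and q_k(t) := Σ_{j=1}^{k−1} Q_j(t) Q_{k−j}(t) for k ≥ 2, assuming all these improper integrals converge, and set φ(t) := −∫_t^∞ Q₂(s) ds, assumed finite. Assume: (i) |∫_t^∞ Q₁(s) ds| ≤ 1 and φ(t) ≤ 6^{−4} for all t ≥ T; (ii) |M(t)| ≤ C(1+t)^{−2β}, |∫_t^∞ M(s) ds| ≤ C(1+t)^{−γ}, and ∫_t^∞ (∫_s^∞ M(σ) dσ)² ds ≤ C(1+t)^{−γ} for all t ≥ T and some constant C > 0. Define b(t) := −Σ_{k=1}^∞ Q_k(t), and assume b is continuously differentiable with b'(t) + b(t)² + M(t) = 0 on [T,∞). Then there exist positive constants b₀, b₁, b₂ such that for all t ≥ T: |∫_t^∞ b(s) ds| ≤ b₀, |b(t)| ≤ b₁(1+t)^{−γ}, and |b'(t)| ≤ b₂(1+t)^{−2β}. -/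

import Mathlib

open MeasureTheory Filter Topology
lemma catalan_le_four_pow (n : ℕ) : catalan n ≤ 4 ^ n := by
  calc catalan n ≤ (n + 1) * catalan n := Nat.le_mul_of_pos_left _ (by omega)
    _ = n.centralBinom := succ_mul_catalan_eq_centralBinom n
    _ = (2 * n).choose n := rfl
    _ ≤ (2 * n + 1).choose n := Nat.choose_le_choose n (by omega)
    _ ≤ 4 ^ n := Nat.choose_middle_le_pow n

noncomputable def Gc (k : ℕ) : ℝ := (catalan (k - 1) : ℝ) * (1 / 36) ^ (k - 2)

lemma Gc_nonneg (k : ℕ) : 0 ≤ Gc k := by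
  unfold Gc; positivity

lemma Gc_two : Gc 2 = 1 := by simp [Gc]

lemma Gc_tail_le (n : ℕ) : Gc (n + 2) ≤ 4 * (1 / 9) ^ n := by
  have h1 : (catalan (n + 1) : ℝ) ≤ (4 : ℝ) ^ (n + 1) := by
    exact_mod_cast Nat.cast_le.mpr (catalan_le_four_pow (n + 1))
  have : Gc (n + 2) = (catalan (n + 1) : ℝ) * (1 / 36) ^ n := by simp [Gc]
  rw [this]
  calc (catalan (n + 1) : ℝ) * (1 / 36) ^ n ≤ (4 : ℝ) ^ (n + 1) * (1 / 36) ^ n := by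
        apply mul_le_mul_of_nonneg_right h1 (by positivity)
    _ = 4 * (1 / 9) ^ n := by
        rw [pow_succ, mul_comm ((4:ℝ)^n) 4, mul_assoc, ← mul_pow]; norm_num

lemma catalan_rec_real (m : ℕ) :
    (catalan (m + 2) : ℝ) =
      2 * catalan (m + 1) +
        ∑ i ∈ Finset.range m, (catalan (i + 1) : ℝ) * catalan (m - i) := by
  have h : catalan (m + 2) =
      ∑ i ∈ Finset.range (m + 2), catalan i * catalan (m + 1 - i) := by
    rw [catalan_succ]
    exact Fin.sum_univ_eq_sum_range (fun i => catalan i * catalan (m + 1 - i)) (m + 2)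
  have h2 : ∑ i ∈ Finset.range (m + 2), catalan i * catalan (m + 1 - i)
      = (∑ i ∈ Finset.range (m + 1), catalan (i + 1) * catalan (m + 1 - (i + 1)))
        + catalan 0 * catalan (m + 1) := by
    rw [Finset.sum_range_succ' (fun i => catalan i * catalan (m + 1 - i)) (m + 1)]
    simp
  have h3 : ∑ i ∈ Finset.range (m + 1), catalan (i + 1) * catalan (m + 1 - (i + 1))
      = (∑ i ∈ Finset.range m, catalan (i + 1) * catalan (m - i))
        + catalan (m + 1) * catalan 0 := by
    rw [Finset.sum_range_succ]
    congr 1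
    · apply Finset.sum_congr rfl
      intro i hi
      congr 2
      omega
    · congr 2
      omega
  have : catalan (m + 2) = (∑ i ∈ Finset.range m, catalan (i + 1) * catalan (m - i))
      + catalan (m + 1) * catalan 0 + catalan 0 * catalan (m + 1) := by
    rw [h, h2, h3]
  rw [this]
  push_cast
  simp [catalan_zero]
  ring

lemma Gc_rec (k : ℕ) (hk : 3 ≤ k) :
    Gc k = (1 / 18) * Gc (k - 1)
      + (1 / 1296) * ∑ j ∈ Finset.Ico 2 (k - 1), Gc j * Gc (k - j) := by
  obtain ⟨m, rfl⟩ : ∃ m, k = m + 3 := ⟨k - 3, by omega⟩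
  rcases m with _ | m
  · norm_num [Gc, catalan_two]
  · -- k = m + 4
    have hrw : m + 1 + 3 = m + 4 := by omega
    rw [hrw]
    have hIco : m + 4 - 1 = m + 3 := by omega
    rw [hIco]
    have hsum : ∑ j ∈ Finset.Ico 2 (m + 3), Gc j * Gc (m + 4 - j)
        = (1 / 36 : ℝ) ^ m *
            ∑ i ∈ Finset.range (m + 1), (catalan (i + 1) : ℝ) * catalan (m + 1 - i) := by
      rw [Finset.sum_Ico_eq_sum_range]
      have hlen : m + 3 - 2 = m + 1 := by omega
      rw [hlen, Finset.mul_sum]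
      apply Finset.sum_congr rfl
      intro i hi
      have him : i ≤ m := by simpa [Nat.lt_succ_iff] using hi
      have e1 : 2 + i - 1 = i + 1 := by omega
      have e2 : 2 + i - 2 = i := by omega
      have e3 : m + 4 - (2 + i) = m + 2 - i := by omega
      have e4 : m + 2 - i - 1 = m + 1 - i := by omega
      have e5 : m + 2 - i - 2 = m - i := by omega
      rw [show Gc (2 + i) = (catalan (i + 1) : ℝ) * (1 / 36) ^ i by rw [Gc, e1, e2],
        e3, show Gc (m + 2 - i) = (catalan (m + 1 - i) : ℝ) * (1 / 36) ^ (m - i) by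
          rw [Gc, e4, e5]]
      have : (1 / 36 : ℝ) ^ i * (1 / 36 : ℝ) ^ (m - i) = (1 / 36 : ℝ) ^ m := by
        rw [← pow_add]
        congr 1
        omega
      calc (catalan (i + 1) : ℝ) * (1 / 36) ^ i * ((catalan (m + 1 - i) : ℝ) * (1 / 36) ^ (m - i))
          = ((1 / 36 : ℝ) ^ i * (1 / 36 : ℝ) ^ (m - i)) * ((catalan (i + 1) : ℝ) * catalan (m + 1 - i)) := by ring
        _ = (1 / 36 : ℝ) ^ m * ((catalan (i + 1) : ℝ) * catalan (m + 1 - i)) := by rw [this]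
    rw [hsum]
    have hcat := catalan_rec_real (m + 1)
    have e6 : m + 1 + 2 = m + 3 := by omega
    have e7 : m + 1 + 1 = m + 2 := by omega
    rw [e6, e7] at hcat
    have hS : ∑ i ∈ Finset.range (m + 1), (catalan (i + 1) : ℝ) * catalan (m + 1 - i)
        = (catalan (m + 3) : ℝ) - 2 * catalan (m + 2) := by linarith
    rw [hS]
    have g1 : Gc (m + 4) = (catalan (m + 3) : ℝ) * (1 / 36) ^ (m + 2) := by
      rw [Gc]; congr 2 <;> omega
    have g2 : Gc (m + 3) = (catalan (m + 2) : ℝ) * (1 / 36) ^ (m + 1) := by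
      rw [Gc]; congr 2 <;> omega
    rw [g1, g2, pow_succ, pow_succ]
    ring

lemma Gc_summable : Summable (fun n : ℕ => Gc (n + 2)) := by
  apply Summable.of_nonneg_of_le (fun n => Gc_nonneg _) (fun n => Gc_tail_le n)
  exact (summable_geometric_of_lt_one (by norm_num) (by norm_num)).mul_left 4

lemma Gc_tsum_le : ∑' n : ℕ, Gc (n + 2) ≤ 9 / 2 := by
  have h1 : ∑' n : ℕ, Gc (n + 2) ≤ ∑' n : ℕ, 4 * (1 / 9 : ℝ) ^ n := by
    apply Summable.tsum_le_tsum (fun n => Gc_tail_le n) Gc_summable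
    exact (summable_geometric_of_lt_one (by norm_num) (by norm_num)).mul_left 4
  have h2 : ∑' n : ℕ, 4 * (1 / 9 : ℝ) ^ n = 4 * (1 - 1 / 9)⁻¹ := by
    rw [tsum_mul_left, tsum_geometric_of_lt_one (by norm_num) (by norm_num)]
  rw [h2] at h1
  linarith

lemma uIcc_subset_Ici' {T a b : ℝ} (ha : T ≤ a) (hb : T ≤ b) : Set.uIcc a b ⊆ Set.Ici T :=
  fun _ hx => le_trans (le_inf ha hb) hx.1

lemma intervalIntegrable_of_Ici {T a b : ℝ} {f : ℝ → ℝ} (hf : ContinuousOn f (Set.Ici T))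
    (ha : T ≤ a) (hb : T ≤ b) : IntervalIntegrable f volume a b :=
  (hf.mono (uIcc_subset_Ici' ha hb)).intervalIntegrable

lemma continuousOn_primitive_Ici {T : ℝ} {f : ℝ → ℝ} (hf : ContinuousOn f (Set.Ici T)) :
    ContinuousOn (fun x => ∫ s in T..x, f s) (Set.Ici T) := by
  intro x hx
  have hx' : T ≤ x := hx
  have hint : IntervalIntegrable f volume (min T T) (max T (x + 1)) :=
    intervalIntegrable_of_Ici hf (by simp) (by simp)
  have h := intervalIntegral.continuousWithinAt_primitive (μ := volume) (f := f) (a := T)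
    (b₀ := x) (b₁ := T) (b₂ := x + 1) (by simp) hint
  apply h.mono_of_mem_nhdsWithin
  rw [← Set.Ici_inter_Iic]
  exact inter_mem_nhdsWithin _ (Iic_mem_nhds (by linarith))

/-- Lemma 3.3 of the paper (estimates (int_b), (est|b|), (estb')): the particular
solution `b = -Σ_{k=1}^∞ Q_k` of the Riccati equation satisfies
`|∫_t^∞ b| ≤ b₀`, `|b(t)| ≤ b₁(1+t)^(-γ)` and `|b'(t)| ≤ b₂(1+t)^(-2β)`. -/
theorem b_estimates
    (T : ℝ) (hT : 0 ≤ T)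
    (β γ : ℝ) (hβ : β < 1) (hγ : 0 < γ) (hγβ : β ≤ γ)
    (M : ℝ → ℝ) (hMc : ContinuousOn M (Set.Ici T))
    (q Q : ℕ → ℝ → ℝ)
    (hq1 : ∀ t, q 1 t = M t)
    (hqk : ∀ k, 2 ≤ k → ∀ t, q k t = ∑ j ∈ Finset.Ico 1 k, Q j t * Q (k - j) t)
    -- `Q k t = -∫_t^∞ q k`, all these improper integrals being convergent
    (hQ : ∀ k, 1 ≤ k → ∀ t ≥ T,
      Tendsto (fun R => ∫ s in t..R, q k s) atTop (𝓝 (-(Q k t))))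
    -- `φ t = -∫_t^∞ Q₂`, assumed finite
    (φ : ℝ → ℝ)
    (hφ : ∀ t ≥ T,
      Tendsto (fun R => ∫ s in t..R, Q 2 s) atTop (𝓝 (-(φ t))))
    -- (i): `|∫_t^∞ Q₁| ≤ 1` and `φ(t) ≤ 6⁻⁴` on `[T,∞)`
    (IQ1 : ℝ → ℝ)
    (hIQ1 : ∀ t ≥ T,
      Tendsto (fun R => ∫ s in t..R, Q 1 s) atTop (𝓝 (IQ1 t)))
    (hIQ1bd : ∀ t ≥ T, |IQ1 t| ≤ 1)
    (hφbd : ∀ t ≥ T, φ t ≤ 1 / 6 ^ 4)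
    -- (ii): decay conditions on `M`, `∫_t^∞ M = -Q₁` and `∫_t^∞ (∫_s^∞ M)²`
    (C : ℝ) (hC : 0 < C)
    (hM2 : ∀ t ≥ T, |M t| ≤ C * (1 + t) ^ (-(2 * β)))
    (hM3a : ∀ t ≥ T, |Q 1 t| ≤ C * (1 + t) ^ (-γ))
    (hM3b : ∀ t ≥ T,
      ∫⁻ s in Set.Ioi t, ENNReal.ofReal (Q 1 s ^ 2)
        ≤ ENNReal.ofReal (C * (1 + t) ^ (-γ)))
    -- `b = -Σ_{k=1}^∞ Q_k`, continuously differentiable and solving the Riccati equation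
    (b b' : ℝ → ℝ)
    (hbsum : ∀ t ≥ T, HasSum (fun k : ℕ => Q (k + 1) t) (-(b t)))
    (hbd : ∀ t ∈ Set.Ici T, HasDerivWithinAt b (b' t) (Set.Ici T) t)
    (hb'c : ContinuousOn b' (Set.Ici T))
    (hric : ∀ t ≥ T, b' t + b t ^ 2 + M t = 0) :
    ∃ b₀ > (0:ℝ), ∃ b₁ > (0:ℝ), ∃ b₂ > (0:ℝ), ∀ t ≥ T,
      (∃ L : ℝ, Tendsto (fun R => ∫ s in t..R, b s) atTop (𝓝 L) ∧ |L| ≤ b₀) ∧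
      |b t| ≤ b₁ * (1 + t) ^ (-γ) ∧
      |b' t| ≤ b₂ * (1 + t) ^ (-(2 * β)) := by
  -- continuity of each Q k on [T, ∞)
  have hQcont : ∀ k, 1 ≤ k → ContinuousOn (Q k) (Set.Ici T) := by
    intro k
    induction k using Nat.strong_induction_on with
    | _ k ih =>
      intro hk1
      have hqc : ContinuousOn (q k) (Set.Ici T) := by
        rcases eq_or_lt_of_le hk1 with h1 | h2
        · exact ContinuousOn.congr hMc (fun t _ => by rw [← h1]; exact hq1 t)
        · have hk2 : 2 ≤ k := h2
          apply ContinuousOn.congr ?_ (fun t (_ : t ∈ Set.Ici T) => hqk k hk2 t)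
          apply continuousOn_finset_sum
          intro j hj
          simp only [Finset.mem_Ico] at hj
          exact (ih j (by omega) (by omega)).mul (ih (k - j) (by omega) (by omega))
      have hform : ∀ t ≥ T, Q k t = Q k T + ∫ s in T..t, q k s := by
        intro t ht
        have h1 := hQ k hk1 T le_rfl
        have h2 := hQ k hk1 t ht
        have heq : ∀ᶠ R in atTop,
            (∫ s in T..t, q k s) + ∫ s in t..R, q k s = ∫ s in T..R, q k s := by
          filter_upwards [eventually_ge_atTop t] with R hR
          exact intervalIntegral.integral_add_adjacent_intervals
            (intervalIntegrable_of_Ici hqc le_rfl ht)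
            (intervalIntegrable_of_Ici hqc ht (le_trans ht hR))
        have h3 : Tendsto (fun R => (∫ s in T..t, q k s) + ∫ s in t..R, q k s) atTop
            (𝓝 ((∫ s in T..t, q k s) + -(Q k t))) := tendsto_const_nhds.add h2
        have h4 := tendsto_nhds_unique (h3.congr' heq) h1
        linarith
      exact (continuousOn_const.add (continuousOn_primitive_Ici hqc)).congr
        (fun t ht => hform t ht)
  have hQ1c : ContinuousOn (Q 1) (Set.Ici T) := hQcont 1 le_rfl
  have hQ2c : ContinuousOn (Q 2) (Set.Ici T) := hQcont 2 (by norm_num)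
  have hqc : ∀ k, 2 ≤ k → ContinuousOn (q k) (Set.Ici T) := by
    intro k hk2
    apply ContinuousOn.congr ?_ (fun t (_ : t ∈ Set.Ici T) => hqk k hk2 t)
    apply continuousOn_finset_sum
    intro j hj
    simp only [Finset.mem_Ico] at hj
    exact (hQcont j (by omega)).mul (hQcont (k - j) (by omega))
  have hq2eq : ∀ t, q 2 t = Q 1 t ^ 2 := by
    intro t
    rw [hqk 2 le_rfl t]
    have : Finset.Ico 1 2 = {1} := rfl
    rw [this, Finset.sum_singleton, pow_two]
  -- integrability of Q₁² on (t, ∞)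
  have hQ1sq_int : ∀ t ≥ T, IntegrableOn (fun s => Q 1 s ^ 2) (Set.Ioi t) := by
    intro t ht
    constructor
    · exact ((hQ1c.pow 2).mono (Set.Ioi_subset_Ici ht)).aestronglyMeasurable measurableSet_Ioi
    · rw [hasFiniteIntegral_iff_ofReal (ae_of_all _ (fun s => sq_nonneg _))]
      exact lt_of_le_of_lt (hM3b t ht) ENNReal.ofReal_lt_top
  have hQ2val : ∀ t ≥ T, -(Q 2 t) = ∫ s in Set.Ioi t, Q 1 s ^ 2 := by
    intro t ht
    have h2 := hQ 2 (by norm_num) t ht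
    have h3 := intervalIntegral_tendsto_integral_Ioi t (hQ1sq_int t ht) tendsto_id
    have hq2fun : (fun R => ∫ s in t..R, q 2 s) = fun R => ∫ s in t..R, Q 1 s ^ 2 := by
      funext R; exact intervalIntegral.integral_congr (fun s _ => hq2eq s)
    rw [hq2fun] at h2
    exact tendsto_nhds_unique h2 h3
  have hP2nn : ∀ t ≥ T, 0 ≤ -(Q 2 t) := by
    intro t ht
    rw [hQ2val t ht]
    exact setIntegral_nonneg measurableSet_Ioi (fun s _ => sq_nonneg _)
  have hQ2nonpos : ∀ s ≥ T, Q 2 s ≤ 0 := fun s hs => by linarith [hP2nn s hs]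
  have hP2le : ∀ t ≥ T, -(Q 2 t) ≤ C * (1 + t) ^ (-γ) := by
    intro t ht
    rw [hQ2val t ht,
      integral_eq_lintegral_of_nonneg_ae (ae_of_all _ (fun s => sq_nonneg (Q 1 s)))
        (((hQ1c.pow 2).mono (Set.Ioi_subset_Ici ht)).aestronglyMeasurable measurableSet_Ioi)]
    exact ENNReal.toReal_le_of_le_ofReal
      (mul_nonneg hC.le (Real.rpow_nonneg (by linarith) _)) (hM3b t ht)
  -- monotonicity of -(Q 2)
  have hmono : ∀ t ≥ T, ∀ s ≥ t, -(Q 2 s) ≤ -(Q 2 t) := by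
    intro t ht s hs
    rw [hQ2val t ht, hQ2val s (le_trans ht hs)]
    apply setIntegral_mono_set (hQ1sq_int t ht)
      (ae_of_all _ (fun x => sq_nonneg (Q 1 x)))
    exact HasSubset.Subset.eventuallyLE (Set.Ioi_subset_Ioi hs)
  -- integrability of Q 2 on (t, ∞) and the value of φ
  have hQ2int : ∀ t ≥ T, IntegrableOn (Q 2) (Set.Ioi t) := by
    intro t ht
    apply MeasureTheory.integrableOn_Ioi_of_intervalIntegral_norm_tendsto (φ t) t ?_
      (tendsto_id (x := atTop)) ?_
    · intro R
      rcases le_or_gt R t with hRt | hRt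
      · rw [Set.Ioc_eq_empty (by exact not_lt.mpr hRt)]
        exact integrableOn_empty
      · exact (intervalIntegrable_of_Ici hQ2c ht (ht.trans hRt.le)).1
    · have heq : ∀ᶠ R in atTop, -∫ s in t..R, Q 2 s = ∫ s in t..R, ‖Q 2 s‖ := by
        filter_upwards [eventually_ge_atTop t] with R hR
        rw [← intervalIntegral.integral_neg]
        apply intervalIntegral.integral_congr
        intro s hs
        rw [Set.uIcc_of_le hR] at hs
        exact (Real.norm_of_nonpos (hQ2nonpos s (le_trans ht hs.1))).symm
      have h2 : Tendsto (fun R => -∫ s in t..R, Q 2 s) atTop (𝓝 (-(-(φ t)))) :=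
        (hφ t ht).neg
      rw [neg_neg] at h2
      exact h2.congr' heq
  have hφval : ∀ t ≥ T, φ t = ∫ s in Set.Ioi t, -(Q 2 s) := by
    intro t ht
    have h3 := intervalIntegral_tendsto_integral_Ioi t (hQ2int t ht) (tendsto_id (x := atTop))
    have h4 := tendsto_nhds_unique (hφ t ht) h3
    rw [integral_neg, ← h4, neg_neg]
  -- integrability of Q 2 ^ 2 and the cross term on (t, ∞)
  have hQ2sq_int : ∀ t ≥ T, IntegrableOn (fun s => Q 2 s ^ 2) (Set.Ioi t) := by
    intro t ht
    apply Integrable.mono' (((hQ2int t ht).neg.const_mul (-(Q 2 t))))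
      (((hQ2c.pow 2).mono (Set.Ioi_subset_Ici ht)).aestronglyMeasurable measurableSet_Ioi)
    apply ae_restrict_of_forall_mem measurableSet_Ioi
    intro s hs
    have hs' : T ≤ s := le_trans ht (le_of_lt hs)
    have h1 : 0 ≤ -(Q 2 s) := hP2nn s hs'
    have h2 : -(Q 2 s) ≤ -(Q 2 t) := hmono t ht s (le_of_lt hs)
    have : Q 2 s ^ 2 = (-(Q 2 s)) * (-(Q 2 s)) := by ring
    show ‖Q 2 s ^ 2‖ ≤ -(Q 2 t) * -(Q 2 s)
    rw [Real.norm_of_nonneg (sq_nonneg _), this]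
    exact mul_le_mul_of_nonneg_right h2 h1
  have hint_sq : ∀ t ≥ T, ∫ s in Set.Ioi t, Q 2 s ^ 2 ≤ (1 / 1296) * (-(Q 2 t)) := by
    intro t ht
    have h1 : ∫ s in Set.Ioi t, Q 2 s ^ 2 ≤ ∫ s in Set.Ioi t, (-(Q 2 t)) * (-(Q 2 s)) := by
      apply setIntegral_mono_on (hQ2sq_int t ht) ((hQ2int t ht).neg.const_mul (-(Q 2 t)))
        measurableSet_Ioi
      intro s hs
      have hs' : T ≤ s := le_trans ht (le_of_lt hs)
      show Q 2 s ^ 2 ≤ -Q 2 t * -(Q 2 s)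
      nlinarith [hP2nn s hs', hmono t ht s (le_of_lt hs)]
    have h2 : ∫ s in Set.Ioi t, (-(Q 2 t)) * (-(Q 2 s)) = (-(Q 2 t)) * φ t := by
      rw [MeasureTheory.integral_const_mul, ← hφval t ht]
    have h3 : (-(Q 2 t)) * φ t ≤ (-(Q 2 t)) * (1 / 1296) := by
      apply mul_le_mul_of_nonneg_left ?_ (hP2nn t ht)
      have := hφbd t ht; norm_num at this ⊢; linarith
    linarith
  have hcross_pt : ∀ s, |Q 1 s * Q 2 s| ≤ (1 / 72) * Q 1 s ^ 2 + 18 * Q 2 s ^ 2 := by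
    intro s
    rcases abs_cases (Q 1 s * Q 2 s) with ⟨h, _⟩ | ⟨h, _⟩ <;> rw [h] <;>
      nlinarith [sq_nonneg (Q 1 s - 36 * Q 2 s), sq_nonneg (Q 1 s + 36 * Q 2 s)]
  have hcross_int : ∀ t ≥ T, IntegrableOn (fun s => |Q 1 s * Q 2 s|) (Set.Ioi t) := by
    intro t ht
    apply Integrable.mono'
      (((hQ1sq_int t ht).const_mul (1 / 72)).add ((hQ2sq_int t ht).const_mul 18))
      (((hQ1c.mul hQ2c).abs.mono (Set.Ioi_subset_Ici ht)).aestronglyMeasurable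
        measurableSet_Ioi)
    apply ae_restrict_of_forall_mem measurableSet_Ioi
    intro s _
    rw [Real.norm_of_nonneg (abs_nonneg _)]
    exact hcross_pt s
  have hcross : ∀ t ≥ T, ∫ s in Set.Ioi t, |Q 1 s * Q 2 s| ≤ (1 / 36) * (-(Q 2 t)) := by
    intro t ht
    have h1 : ∫ s in Set.Ioi t, |Q 1 s * Q 2 s|
        ≤ ∫ s in Set.Ioi t, ((1 / 72) * Q 1 s ^ 2 + 18 * Q 2 s ^ 2) := by
      apply setIntegral_mono_on (hcross_int t ht)
        (((hQ1sq_int t ht).const_mul (1 / 72)).add ((hQ2sq_int t ht).const_mul 18))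
        measurableSet_Ioi
      exact fun s _ => hcross_pt s
    have h2 : ∫ s in Set.Ioi t, ((1 / 72) * Q 1 s ^ 2 + 18 * Q 2 s ^ 2)
        = (1 / 72) * (∫ s in Set.Ioi t, Q 1 s ^ 2) + 18 * ∫ s in Set.Ioi t, Q 2 s ^ 2 := by
      rw [integral_add ((hQ1sq_int t ht).const_mul (1 / 72)) ((hQ2sq_int t ht).const_mul 18),
        MeasureTheory.integral_const_mul, MeasureTheory.integral_const_mul]
    have h3 := hint_sq t ht
    have h4 := hQ2val t ht
    have h5 := hP2nn t ht
    rw [h2, ← h4] at h1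
    linarith
  -- the key inductive estimate: |Q k t| ≤ Gc k * (-(Q 2 t)) for k ≥ 2
  have key : ∀ k, 2 ≤ k → ∀ t ≥ T, |Q k t| ≤ Gc k * (-(Q 2 t)) := by
    intro k
    induction k using Nat.strong_induction_on with
    | _ k ih =>
      intro hk2 t ht
      rcases eq_or_lt_of_le hk2 with h2 | h3
      · rw [← h2, Gc_two, one_mul]
        rw [abs_of_nonpos (hQ2nonpos t ht)]
      · have hk3 : 3 ≤ k := h3
        set W := ∑ j ∈ Finset.Ico 2 (k - 1), Gc j * Gc (k - j) with hWdef
        have hWnn : 0 ≤ W :=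
          Finset.sum_nonneg fun j _ => mul_nonneg (Gc_nonneg _) (Gc_nonneg _)
        have hGnn : 0 ≤ Gc (k - 1) := Gc_nonneg _
        set g : ℝ → ℝ := fun s => 2 * Gc (k - 1) * |Q 1 s * Q 2 s| + W * Q 2 s ^ 2 with hgdef
        have hpt : ∀ s, T ≤ s → |q k s| ≤ g s := by
          intro s hs
          have habs2 : |Q 2 s| = -(Q 2 s) := abs_of_nonpos (hQ2nonpos s hs)
          have hsplit : Finset.Ico 1 k = insert 1 (insert (k - 1) (Finset.Ico 2 (k - 1))) := by
            ext j
            simp only [Finset.mem_Ico, Finset.mem_insert]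
            omega
          have h1n : (1 : ℕ) ∉ insert (k - 1) (Finset.Ico 2 (k - 1)) := by
            simp only [Finset.mem_insert, Finset.mem_Ico]
            omega
          have h2n : (k - 1) ∉ Finset.Ico 2 (k - 1) := by simp [Finset.mem_Ico]
          rw [hqk k hk2 s, hsplit, Finset.sum_insert h1n, Finset.sum_insert h2n]
          have e1 : k - (k - 1) = 1 := by omega
          rw [e1]
          have hQk1 : |Q (k - 1) s| ≤ Gc (k - 1) * |Q 2 s| := by
            rw [habs2]; exact ih (k - 1) (by omega) (by omega) s hs
          have hterm1 : |Q 1 s * Q (k - 1) s| ≤ Gc (k - 1) * |Q 1 s * Q 2 s| := by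
            rw [abs_mul, abs_mul]
            have h := mul_le_mul_of_nonneg_left hQk1 (abs_nonneg (Q 1 s))
            nlinarith [h]
          have hterm2 : |Q (k - 1) s * Q 1 s| ≤ Gc (k - 1) * |Q 1 s * Q 2 s| := by
            rw [mul_comm]; exact hterm1
          have hmid : |∑ j ∈ Finset.Ico 2 (k - 1), Q j s * Q (k - j) s| ≤ W * Q 2 s ^ 2 := by
            calc |∑ j ∈ Finset.Ico 2 (k - 1), Q j s * Q (k - j) s|
                ≤ ∑ j ∈ Finset.Ico 2 (k - 1), |Q j s * Q (k - j) s| :=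
                  Finset.abs_sum_le_sum_abs _ _
              _ ≤ ∑ j ∈ Finset.Ico 2 (k - 1), Gc j * Gc (k - j) * Q 2 s ^ 2 := by
                  apply Finset.sum_le_sum
                  intro j hj
                  simp only [Finset.mem_Ico] at hj
                  have hj1 := ih j (by omega) (by omega) s hs
                  have hj2 := ih (k - j) (by omega) (by omega) s hs
                  rw [abs_mul]
                  have h := mul_le_mul hj1 hj2 (abs_nonneg _)
                    (mul_nonneg (Gc_nonneg _) (hP2nn s hs))
                  nlinarith [h]
              _ = W * Q 2 s ^ 2 := by rw [hWdef, Finset.sum_mul]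
          have habs : |Q 1 s * Q (k - 1) s + (Q (k - 1) s * Q 1 s
                + ∑ j ∈ Finset.Ico 2 (k - 1), Q j s * Q (k - j) s)|
              ≤ |Q 1 s * Q (k - 1) s| + (|Q (k - 1) s * Q 1 s|
                + |∑ j ∈ Finset.Ico 2 (k - 1), Q j s * Q (k - j) s|) :=
            (abs_add_le _ _).trans (add_le_add_right (abs_add_le _ _) _)
          show _ ≤ 2 * Gc (k - 1) * |Q 1 s * Q 2 s| + W * Q 2 s ^ 2
          linarith [habs, hterm1, hterm2, hmid]
        have hgint : IntegrableOn g (Set.Ioi t) :=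
          ((hcross_int t ht).const_mul _).add ((hQ2sq_int t ht).const_mul _)
        have hgc : ContinuousOn g (Set.Ici T) :=
          (continuousOn_const.mul ((hQ1c.mul hQ2c).abs)).add
            (continuousOn_const.mul (hQ2c.pow 2))
        have hgnn : ∀ s, 0 ≤ g s := fun s =>
          add_nonneg (mul_nonneg (by positivity) (abs_nonneg _))
            (mul_nonneg hWnn (sq_nonneg _))
        have hgIoi : ∫ s in Set.Ioi t, g s ≤ Gc k * (-(Q 2 t)) := by
          have hsplitint : ∫ s in Set.Ioi t, g s
              = 2 * Gc (k - 1) * (∫ s in Set.Ioi t, |Q 1 s * Q 2 s|)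
                + W * ∫ s in Set.Ioi t, Q 2 s ^ 2 := by
            rw [hgdef]
            rw [integral_add ((hcross_int t ht).const_mul _) ((hQ2sq_int t ht).const_mul _),
              MeasureTheory.integral_const_mul, MeasureTheory.integral_const_mul]
          rw [hsplitint, Gc_rec k hk3, ← hWdef]
          have h1 := hcross t ht
          have h2 := hint_sq t ht
          have h3 := mul_le_mul_of_nonneg_left h1 (by positivity : (0:ℝ) ≤ 2 * Gc (k - 1))
          have h4 := mul_le_mul_of_nonneg_left h2 hWnn
          nlinarith [h3, h4]
        have hbd : ∀ R, t ≤ R → |∫ s in t..R, q k s| ≤ ∫ s in Set.Ioi t, g s := by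
          intro R hR
          have hTR : T ≤ R := le_trans ht hR
          have hint1 : IntervalIntegrable (q k) volume t R :=
            intervalIntegrable_of_Ici (hqc k (by omega)) ht hTR
          calc |∫ s in t..R, q k s| ≤ ∫ s in t..R, |q k s| :=
                intervalIntegral.abs_integral_le_integral_abs hR
            _ ≤ ∫ s in t..R, g s := by
                apply intervalIntegral.integral_mono_on hR hint1.abs
                  (intervalIntegrable_of_Ici hgc ht hTR)
                intro s hs
                exact hpt s (le_trans ht hs.1)
            _ = ∫ s in Set.Ioc t R, g s := intervalIntegral.integral_of_le hR
            _ ≤ ∫ s in Set.Ioi t, g s := by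
                apply setIntegral_mono_set hgint (ae_of_all _ hgnn)
                exact HasSubset.Subset.eventuallyLE Set.Ioc_subset_Ioi_self
        have hlim := (hQ k (by omega) t ht).abs
        have hle := le_of_tendsto hlim ((eventually_ge_atTop t).mono hbd)
        rw [abs_neg] at hle
        exact hle.trans hgIoi
  -- continuity of b
  have hbc : ContinuousOn b (Set.Ici T) := fun t ht => (hbd t ht).continuousWithinAt
  -- tail sum bound
  have htail : ∀ t ≥ T, |b t + Q 1 t| ≤ (9 / 2) * (-(Q 2 t)) := by
    intro t ht
    have hs0 := hbsum t ht
    have hs1 : HasSum (fun n : ℕ => Q (n + 1 + 1) t)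
        (-(b t) - ∑ i ∈ Finset.range 1, Q (i + 1) t) := (hasSum_nat_add_iff' 1).mpr hs0
    have hs2 : HasSum (fun n : ℕ => Q (n + 2) t) (-(b t) - Q 1 t) := by
      simpa using hs1
    have hbound : ∀ n : ℕ, |Q (n + 2) t| ≤ Gc (n + 2) * (-(Q 2 t)) :=
      fun n => key (n + 2) (by omega) t ht
    have hgs : Summable (fun n : ℕ => Gc (n + 2) * (-(Q 2 t))) := Gc_summable.mul_right _
    have hsummf : Summable (fun n : ℕ => |Q (n + 2) t|) :=
      Summable.of_nonneg_of_le (fun n => abs_nonneg _) hbound hgs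
    have h1 : |(-(b t) - Q 1 t)| ≤ ∑' n : ℕ, |Q (n + 2) t| := by
      rw [← hs2.tsum_eq]
      have h := norm_tsum_le_tsum_norm (f := fun n : ℕ => Q (n + 2) t)
        (by simpa [Real.norm_eq_abs] using hsummf)
      simpa [Real.norm_eq_abs] using h
    have h2 : ∑' n : ℕ, |Q (n + 2) t| ≤ ∑' n : ℕ, Gc (n + 2) * (-(Q 2 t)) :=
      Summable.tsum_le_tsum hbound hsummf hgs
    have h3 : ∑' n : ℕ, Gc (n + 2) * (-(Q 2 t)) = (∑' n : ℕ, Gc (n + 2)) * (-(Q 2 t)) :=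
      tsum_mul_right
    have h4 : (∑' n : ℕ, Gc (n + 2)) * (-(Q 2 t)) ≤ (9 / 2) * (-(Q 2 t)) :=
      mul_le_mul_of_nonneg_right Gc_tsum_le (hP2nn t ht)
    have h5 : |b t + Q 1 t| = |(-(b t) - Q 1 t)| := by
      rw [show -(b t) - Q 1 t = -(b t + Q 1 t) by ring, abs_neg]
    linarith
  -- pointwise bound on b
  have hbpt : ∀ t ≥ T, |b t| ≤ 6 * C * (1 + t) ^ (-γ) := by
    intro t ht
    have h0 : (0:ℝ) < 1 + t := by linarith
    have h1 := htail t ht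
    have h2 := hM3a t ht
    have h3 := hP2le t ht
    have h4 : |b t| ≤ |b t + Q 1 t| + |Q 1 t| := by
      have h := abs_add_le (b t + Q 1 t) (-(Q 1 t))
      simpa using h
    have h5 := mul_le_mul_of_nonneg_left h3 (by norm_num : (0:ℝ) ≤ 9 / 2)
    have hCX : 0 ≤ C * (1 + t) ^ (-γ) := mul_nonneg hC.le (Real.rpow_nonneg h0.le _)
    linarith
  -- the improper integral of b
  have hmain : ∀ t ≥ T, ∃ L : ℝ,
      Tendsto (fun R => ∫ s in t..R, b s) atTop (𝓝 L) ∧ |L| ≤ 2 := by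
    intro t ht
    set r : ℝ → ℝ := fun s => -(b s) - Q 1 s with hrdef
    have hrc : ContinuousOn r (Set.Ici T) := (hbc.neg).sub hQ1c
    have hrbd : ∀ s, T ≤ s → |r s| ≤ (9 / 2) * (-(Q 2 s)) := by
      intro s hs
      show |(-(b s) - Q 1 s)| ≤ _
      rw [show -(b s) - Q 1 s = -(b s + Q 1 s) by ring, abs_neg]
      exact htail s hs
    have hrint : IntegrableOn r (Set.Ioi t) := by
      apply Integrable.mono' ((hQ2int t ht).neg.const_mul (9 / 2))
        ((hrc.mono (Set.Ioi_subset_Ici ht)).aestronglyMeasurable measurableSet_Ioi)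
      apply ae_restrict_of_forall_mem measurableSet_Ioi
      intro s hs
      rw [Real.norm_eq_abs]
      exact hrbd s (le_trans ht hs.le)
    have hbint : ∀ R, t ≤ R → ∫ s in t..R, b s
        = -(∫ s in t..R, Q 1 s) - ∫ s in t..R, r s := by
      intro R hR
      have hTR := le_trans ht hR
      have hInt1 : IntervalIntegrable (Q 1) volume t R :=
        intervalIntegrable_of_Ici hQ1c ht hTR
      have hIntr : IntervalIntegrable r volume t R :=
        intervalIntegrable_of_Ici hrc ht hTR
      have hcong : ∫ s in t..R, b s = ∫ s in t..R, (-(Q 1 s) - r s) := by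
        apply intervalIntegral.integral_congr
        intro s _
        show b s = -(Q 1 s) - (-(b s) - Q 1 s)
        ring
      have hsub : ∫ s in t..R, (-(Q 1 s) - r s)
          = (∫ s in t..R, -(Q 1 s)) - ∫ s in t..R, r s :=
        intervalIntegral.integral_sub hInt1.neg hIntr
      rw [hcong, hsub, intervalIntegral.integral_neg]
    have hTend1 := hIQ1 t ht
    have hTendr := intervalIntegral_tendsto_integral_Ioi t hrint (tendsto_id (x := atTop))
    refine ⟨-(IQ1 t) - ∫ s in Set.Ioi t, r s, ?_, ?_⟩
    · have h := (hTend1.neg).sub hTendr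
      apply h.congr'
      filter_upwards [eventually_ge_atTop t] with R hR
      exact (hbint R hR).symm
    · have h5 : |∫ s in Set.Ioi t, r s| ≤ ∫ s in Set.Ioi t, (9 / 2) * (-(Q 2 s)) := by
        have h6 := MeasureTheory.norm_integral_le_integral_norm (μ := volume.restrict (Set.Ioi t)) r
        rw [Real.norm_eq_abs] at h6
        refine h6.trans ?_
        apply integral_mono_ae hrint.norm ((hQ2int t ht).neg.const_mul (9 / 2))
        apply ae_restrict_of_forall_mem measurableSet_Ioi
        intro s hs
        show ‖r s‖ ≤ 9 / 2 * -(Q 2 s)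
        rw [Real.norm_eq_abs]
        exact hrbd s (le_trans ht hs.le)
      have h7 : ∫ s in Set.Ioi t, (9 / 2) * (-(Q 2 s)) = (9 / 2) * φ t := by
        rw [MeasureTheory.integral_const_mul, ← hφval t ht]
      have h8 := hφbd t ht
      have h9 := hIQ1bd t ht
      have h10 : |(-(IQ1 t)) - ∫ s in Set.Ioi t, r s|
          ≤ |IQ1 t| + |∫ s in Set.Ioi t, r s| := by
        rw [sub_eq_add_neg]
        refine (abs_add_le _ _).trans ?_
        rw [abs_neg, abs_neg]
      norm_num at h8
      linarith
  -- bound on b'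
  have hb'pt : ∀ t ≥ T, |b' t| ≤ (36 * C ^ 2 + C) * (1 + t) ^ (-(2 * β)) := by
    intro t ht
    have h0 : (0:ℝ) < 1 + t := by linarith
    have h1 : (1:ℝ) ≤ 1 + t := by linarith
    have heq : b' t = -(b t ^ 2) - M t := by linarith [hric t ht]
    have h2 : |b' t| ≤ b t ^ 2 + |M t| := by
      rw [heq, sub_eq_add_neg]
      refine (abs_add_le _ _).trans ?_
      rw [abs_neg, abs_neg, abs_of_nonneg (sq_nonneg _)]
    have hX := hbpt t ht
    have h3 : b t ^ 2 ≤ 36 * C ^ 2 * ((1 + t) ^ (-γ)) ^ 2 := by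
      nlinarith [mul_self_le_mul_self (abs_nonneg (b t)) hX, sq_abs (b t)]
    have h4 : ((1 + t) ^ (-γ)) ^ 2 = (1 + t) ^ (-(2 * γ)) := by
      rw [← Real.rpow_natCast ((1 + t) ^ (-γ)) 2, ← Real.rpow_mul h0.le]
      congr 1
      push_cast
      ring
    have h5 : (1 + t) ^ (-(2 * γ)) ≤ (1 + t) ^ (-(2 * β)) :=
      Real.rpow_le_rpow_of_exponent_le h1 (by linarith)
    have h6 := hM2 t ht
    have h7 : 36 * C ^ 2 * (1 + t) ^ (-(2 * γ)) ≤ 36 * C ^ 2 * (1 + t) ^ (-(2 * β)) :=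
      mul_le_mul_of_nonneg_left h5 (by positivity)
    rw [h4] at h3
    linarith
  refine ⟨2, by norm_num, 6 * C, by positivity, 36 * C ^ 2 + C, by positivity, ?_⟩
  intro t ht
  exact ⟨hmain t ht, hbpt t ht, hb'pt t ht⟩
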